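/- Let G be a graph on n ≥ 4 vertices with no universal line. If G induces exactly n distinct lines, then G consists of a clique of size n−1 together with one additional vertex having at most one neighbor in the clique. -/
import Mathlib
set_option linter.unusedSectionVars false
set_option maxHeartbeats 1000000

def gline {V : Type*} (G : SimpleGraph V) [DecidableRel G.Adj] (a b : V) : Set V :=
  if G.Adj a b then {a, b} ∪ {c | G.Adj a c ∧ G.Adj b c} else {a, b}

def glines {V : Type*} (G : SimpleGraph V) [DecidableRel G.Adj] : Set (Set V) :=
  {s | ∃ a b, a ≠ b ∧ s = gline G a b}

def Bset {V : Type*} (G : SimpleGraph V) [DecidableRel G.Adj] : Set (Set V) :=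
  {s | ∃ a b, a ≠ b ∧ ¬ G.Adj a b ∧ s = {a, b}}

def Uset {V : Type*} (G : SimpleGraph V) [DecidableRel G.Adj] : Set (Set V) :=
  glines G \ Bset G

section Aux

variable {V : Type*} [Fintype V] {G : SimpleGraph V} [DecidableRel G.Adj]

lemma gline_adj {a b : V} (h : G.Adj a b) :
    gline G a b = {a, b} ∪ {c | G.Adj a c ∧ G.Adj b c} := by
  rw [gline, if_pos h]

lemma gline_nonadj {a b : V} (h : ¬ G.Adj a b) : gline G a b = {a, b} := by
  rw [gline, if_neg h]

lemma mem_gline_adj {a b z : V} (h : G.Adj a b) :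
    z ∈ gline G a b ↔ z = a ∨ z = b ∨ (G.Adj a z ∧ G.Adj b z) := by
  rw [gline_adj h]
  simp only [Set.mem_union, Set.mem_insert_iff, Set.mem_setOf_eq, Set.mem_singleton_iff]
  tauto

lemma left_mem_gline (a b : V) : a ∈ gline G a b := by
  by_cases h : G.Adj a b
  · rw [mem_gline_adj h]; left; rfl
  · rw [gline_nonadj h]; left; rfl

lemma right_mem_gline (a b : V) : b ∈ gline G a b := by
  by_cases h : G.Adj a b
  · rw [mem_gline_adj h]; right; left; rfl
  · rw [gline_nonadj h]; right; rfl

lemma gline_comm (a b : V) : gline G a b = gline G b a := by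
  by_cases h : G.Adj a b
  · rw [gline_adj h, gline_adj h.symm]
    ext z
    simp only [Set.mem_union, Set.mem_insert_iff, Set.mem_setOf_eq, Set.mem_singleton_iff]
    tauto
  · rw [gline_nonadj h, gline_nonadj (fun hh => h hh.symm)]
    exact Set.pair_comm a b

lemma gline_mem_glines {a b : V} (h : a ≠ b) : gline G a b ∈ glines G :=
  ⟨a, b, h, rfl⟩

lemma pair_eq_pair {a b c d : V} (hne : a ≠ b) (h : ({a, b} : Set V) = {c, d}) :
    (a = c ∧ b = d) ∨ (a = d ∧ b = c) := by
  have ha : a ∈ ({c, d} : Set V) := h ▸ (by left; rfl)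
  have hb : b ∈ ({c, d} : Set V) := h ▸ (by right; rfl)
  simp only [Set.mem_insert_iff, Set.mem_singleton_iff] at ha hb
  rcases ha with rfl | rfl
  · rcases hb with rfl | rfl
    · exact absurd rfl hne
    · exact Or.inl ⟨rfl, rfl⟩
  · rcases hb with rfl | rfl
    · exact Or.inr ⟨rfl, rfl⟩
    · exact absurd rfl hne

lemma Bset_subset_glines : Bset G ⊆ glines G := by
  rintro s ⟨a, b, hne, hnadj, rfl⟩
  exact (gline_nonadj hnadj) ▸ gline_mem_glines hne

lemma edge_gline_notMem_Bset {a b : V} (h : G.Adj a b) : gline G a b ∉ Bset G := by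
  rintro ⟨v, w, hvw, hnadj, hpair⟩
  have ha : a ∈ ({v, w} : Set V) := hpair ▸ left_mem_gline a b
  have hb : b ∈ ({v, w} : Set V) := hpair ▸ right_mem_gline a b
  simp only [Set.mem_insert_iff, Set.mem_singleton_iff] at ha hb
  rcases ha with rfl | rfl <;> rcases hb with rfl | rfl
  · exact h.ne rfl
  · exact hnadj h
  · exact hnadj h.symm
  · exact h.ne rfl

lemma edge_gline_mem_Uset {a b : V} (h : G.Adj a b) : gline G a b ∈ Uset G :=
  ⟨gline_mem_glines h.ne, edge_gline_notMem_Bset h⟩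

lemma mem_Uset_iff {s : Set V} :
    s ∈ Uset G ↔ ∃ a b, G.Adj a b ∧ s = gline G a b := by
  constructor
  · rintro ⟨⟨a, b, hne, rfl⟩, hnB⟩
    by_cases h : G.Adj a b
    · exact ⟨a, b, h, rfl⟩
    · exact absurd ⟨a, b, hne, h, gline_nonadj h⟩ hnB
  · rintro ⟨a, b, h, rfl⟩
    exact edge_gline_mem_Uset h

lemma card_B_add_card_U (n : ℕ) (hlines : (glines G).ncard = n) :
    (Bset G).ncard + (Uset G).ncard = n := by
  have h1 := Set.ncard_diff_add_ncard_of_subset (Bset_subset_glines (G := G))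
    (Set.toFinite _)
  rw [← hlines, ← h1, Nat.add_comm]
  rfl

lemma universal_unique (huniv : ∀ a b : V, a ≠ b → gline G a b ≠ Set.univ)
    {v w : V} (hv : ∀ z, z ≠ v → G.Adj v z) (hw : ∀ z, z ≠ w → G.Adj w z) : v = w := by
  by_contra hne
  apply huniv v w hne
  apply Set.eq_univ_of_forall
  intro z
  have hadj : G.Adj v w := hv w (Ne.symm hne)
  rw [mem_gline_adj hadj]
  by_cases hzv : z = v
  · exact Or.inl hzv
  by_cases hzw : z = w
  · exact Or.inr (Or.inl hzw)
  · exact Or.inr (Or.inr ⟨hv z hzv, hw z hzw⟩)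

lemma exists_edge (n : ℕ) (hn : Fintype.card V = n) (h4 : 4 ≤ n)
    (hlines : (glines G).ncard = n) : ∃ a b : V, G.Adj a b := by
  by_contra hno
  push_neg at hno
  have hpos : 1 < Fintype.card V := by omega
  obtain ⟨x, y, hxy⟩ := Fintype.exists_pair_of_one_lt_card hpos
  set F1 : Set (Set V) := (fun v => ({x, v} : Set V)) '' {x}ᶜ with hF1
  set F2 : Set (Set V) := (fun v => ({y, v} : Set V)) '' ({x, y} : Set V)ᶜ with hF2
  have hsub : F1 ∪ F2 ⊆ glines G := by
    rintro s (⟨v, hv, rfl⟩ | ⟨v, hv, rfl⟩)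
    · have hvx : v ≠ x := by simpa using hv
      show ({x, v} : Set V) ∈ glines G
      rw [← gline_nonadj (hno x v)]
      exact gline_mem_glines (Ne.symm hvx)
    · have hvy : v ≠ y := by
        simp only [Set.mem_compl_iff, Set.mem_insert_iff, Set.mem_singleton_iff] at hv
        tauto
      show ({y, v} : Set V) ∈ glines G
      rw [← gline_nonadj (hno y v)]
      exact gline_mem_glines (Ne.symm hvy)
  have hinj1 : Set.InjOn (fun v => ({x, v} : Set V)) {x}ᶜ := by
    intro a ha b hb hab
    have ha' : a ≠ x := by simpa using ha
    rcases pair_eq_pair (Ne.symm ha') (hab : ({x, a} : Set V) = {x, b}) with ⟨_, h⟩ | ⟨h1, h2⟩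
    · exact h
    · exact absurd h2 ha'
  have hinj2 : Set.InjOn (fun v => ({y, v} : Set V)) ({x, y} : Set V)ᶜ := by
    intro a ha b hb hab
    have ha' : a ≠ y := by
      simp only [Set.mem_compl_iff, Set.mem_insert_iff, Set.mem_singleton_iff] at ha; tauto
    rcases pair_eq_pair (Ne.symm ha') (hab : ({y, a} : Set V) = {y, b}) with ⟨_, h⟩ | ⟨h1, h2⟩
    · exact h
    · exact absurd h2 ha'
  have hcard1 : F1.ncard = n - 1 := by
    rw [hF1, Set.ncard_image_of_injOn hinj1]
    have := Set.ncard_add_ncard_compl ({x} : Set V) (Set.toFinite _) (Set.toFinite _)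
    rw [Set.ncard_singleton, Nat.card_eq_fintype_card, hn] at this
    omega
  have hcard2 : F2.ncard = n - 2 := by
    rw [hF2, Set.ncard_image_of_injOn hinj2]
    have := Set.ncard_add_ncard_compl ({x, y} : Set V) (Set.toFinite _) (Set.toFinite _)
    rw [Set.ncard_pair hxy, Nat.card_eq_fintype_card, hn] at this
    omega
  have hdisj : Disjoint F1 F2 := by
    rw [Set.disjoint_left]
    rintro s ⟨a, ha, rfl⟩ ⟨b, hb, hs⟩
    have ha' : a ≠ x := by simpa using ha
    have hb' : b ∉ ({x, y} : Set V) := hb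
    simp only [Set.mem_insert_iff, Set.mem_singleton_iff, not_or] at hb'
    rcases pair_eq_pair (Ne.symm ha') (hs.symm : ({x, a} : Set V) = {y, b}) with ⟨h1, _⟩ | ⟨h1, h2⟩
    · exact hxy h1
    · exact hb'.1 h1.symm
  have hle : (F1 ∪ F2).ncard ≤ n := by
    rw [← hlines]
    exact Set.ncard_le_ncard hsub (Set.toFinite _)
  rw [Set.ncard_union_eq hdisj (Set.toFinite _) (Set.toFinite _), hcard1, hcard2] at hle
  omega

end Aux
section CaseB

variable {V : Type*} [Fintype V] {G : SimpleGraph V} [DecidableRel G.Adj]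

def hasL (G : SimpleGraph V) [DecidableRel G.Adj] (v : V) (L : Set V) : Prop :=
  ∃ w, G.Adj v w ∧ gline G v w = L

lemma mem_of_hasL {v : V} {L : Set V} (h : hasL G v L) : v ∈ L := by
  obtain ⟨w, _, rfl⟩ := h
  exact left_mem_gline v w

lemma adj_of_common {v w : V} {L : Set V} (hne : v ≠ w)
    (hv : hasL G v L) (hw : hasL G w L) : G.Adj v w := by
  obtain ⟨t, hvt, rfl⟩ := hv
  have hwmem : w ∈ gline G v t := mem_of_hasL hw
  rw [mem_gline_adj hvt] at hwmem
  rcases hwmem with rfl | rfl | ⟨h1, _⟩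
  · exact absurd rfl hne
  · exact hvt
  · exact h1

lemma caseB' (n : ℕ) (hn : Fintype.card V = n) (h4 : 4 ≤ n)
    (huniv : ∀ a b : V, a ≠ b → gline G a b ≠ Set.univ)
    (hlines : (glines G).ncard = n)
    (hedge : ∀ v : V, ∃ w, G.Adj v w)
    (hU2 : (Uset G).ncard = 2) :
    ∃ x : V, (∀ a b : V, a ≠ x → b ≠ x → a ≠ b → G.Adj a b) ∧
      {y : V | G.Adj x y}.ncard ≤ 1 := by
  classical
  obtain ⟨L1, L2, hne12, hUeq⟩ := Set.ncard_eq_two.mp hU2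
  have hlineU : ∀ v w : V, G.Adj v w → gline G v w = L1 ∨ gline G v w = L2 := by
    intro v w hvw
    have := edge_gline_mem_Uset hvw
    rw [hUeq] at this
    simpa using this
  have hcover : ∀ v : V, hasL G v L1 ∨ hasL G v L2 := by
    intro v
    obtain ⟨w, hw⟩ := hedge v
    rcases hlineU v w hw with h | h
    · exact Or.inl ⟨w, hw, h⟩
    · exact Or.inr ⟨w, hw, h⟩
  set A : Set V := {v | hasL G v L1 ∧ ¬ hasL G v L2} with hA
  set B2 : Set V := {v | ¬ hasL G v L1 ∧ hasL G v L2} with hB2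
  set C2 : Set V := {v | hasL G v L1 ∧ hasL G v L2} with hC2
  have hCuniv : ∀ c ∈ C2, ∀ z, z ≠ c → G.Adj c z := by
    intro c hc z hz
    rcases hcover z with h | h
    · exact adj_of_common (Ne.symm hz) hc.1 h
    · exact adj_of_common (Ne.symm hz) hc.2 h
  have hCsub : C2.Subsingleton := by
    intro c hc c' hc'
    exact universal_unique huniv (hCuniv c hc) (hCuniv c' hc')
  have hABne : ∀ a ∈ A, ∀ b ∈ B2, a ≠ b := by
    rintro a ha b hb rfl
    exact hb.1 ha.1
  have hAB : ∀ a ∈ A, ∀ b ∈ B2, ¬ G.Adj a b := by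
    intro a ha b hb hadj
    rcases hlineU a b hadj with h | h
    · exact hb.1 ⟨a, hadj.symm, (gline_comm b a).trans h⟩
    · exact ha.2 ⟨b, hadj, h⟩
  have hsplit : ∀ v w : V, v ≠ w → ¬ G.Adj v w →
      (v ∈ A ∧ w ∈ B2) ∨ (v ∈ B2 ∧ w ∈ A) := by
    intro v w hne hnadj
    have h1 : ¬ (hasL G v L1 ∧ hasL G w L1) := by
      rintro ⟨h, h'⟩; exact hnadj (adj_of_common hne h h')
    have h2 : ¬ (hasL G v L2 ∧ hasL G w L2) := by
      rintro ⟨h, h'⟩; exact hnadj (adj_of_common hne h h')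
    have hv := hcover v
    have hw := hcover w
    simp only [hA, hB2, Set.mem_setOf_eq]
    tauto
  have hAne : A.Nonempty := by
    have hL2U : L2 ∈ Uset G := by rw [hUeq]; right; rfl
    obtain ⟨a2, b2, hab2, hgl2⟩ := mem_Uset_iff.mp hL2U
    obtain ⟨z, hz⟩ := (Set.ne_univ_iff_exists_notMem L2).mp
      (fun h => huniv a2 b2 hab2.ne (hgl2 ▸ h))
    refine ⟨z, ?_, fun h => hz (mem_of_hasL h)⟩
    rcases hcover z with h | h
    · exact h
    · exact absurd (mem_of_hasL h) hz
  have hBne : B2.Nonempty := by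
    have hL1U : L1 ∈ Uset G := by rw [hUeq]; left; rfl
    obtain ⟨a1, b1, hab1, hgl1⟩ := mem_Uset_iff.mp hL1U
    obtain ⟨z, hz⟩ := (Set.ne_univ_iff_exists_notMem L1).mp
      (fun h => huniv a1 b1 hab1.ne (hgl1 ▸ h))
    refine ⟨z, fun h => hz (mem_of_hasL h), ?_⟩
    rcases hcover z with h | h
    · exact absurd (mem_of_hasL h) hz
    · exact h
  have hBprod : Bset G = (fun p : V × V => ({p.1, p.2} : Set V)) '' (A ×ˢ B2) := by
    ext s
    constructor
    · rintro ⟨v, w, hne, hnadj, rfl⟩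
      rcases hsplit v w hne hnadj with ⟨hv, hw⟩ | ⟨hv, hw⟩
      · exact ⟨(v, w), ⟨hv, hw⟩, rfl⟩
      · exact ⟨(w, v), ⟨hw, hv⟩, (Set.pair_comm w v)⟩
    · rintro ⟨⟨a, b⟩, ⟨ha, hb⟩, rfl⟩
      exact ⟨a, b, hABne a ha b hb, hAB a ha b hb, rfl⟩
  have hinj : Set.InjOn (fun p : V × V => ({p.1, p.2} : Set V)) (A ×ˢ B2) := by
    rintro ⟨a, b⟩ ⟨ha, hb⟩ ⟨a', b'⟩ ⟨ha', hb'⟩ hpq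
    have hab : a ≠ b := hABne a ha b hb
    rcases pair_eq_pair hab (hpq : ({a, b} : Set V) = {a', b'}) with ⟨h1, h2⟩ | ⟨h1, h2⟩
    · simp [h1, h2]
    · exfalso
      subst h1
      exact hb'.1 ha.1
  have hprodcard : (A ×ˢ B2).ncard = A.ncard * B2.ncard := by
    rw [← Nat.card_coe_set_eq, ← Nat.card_coe_set_eq, ← Nat.card_coe_set_eq]
    rw [Nat.card_congr (Equiv.Set.prod A B2)]
    exact Nat.card_prod _ _
  have hBcard : (Bset G).ncard = A.ncard * B2.ncard := by
    rw [hBprod, Set.ncard_image_of_injOn hinj, hprodcard]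
  have hdisjAB : Disjoint A B2 := by
    rw [Set.disjoint_left]
    rintro v hv hv'
    exact hv'.1 hv.1
  have hdisjABC : Disjoint (A ∪ B2) C2 := by
    rw [Set.disjoint_left]
    rintro v (hv | hv) hv'
    · exact hv.2 hv'.2
    · exact hv.1 hv'.1
  have hunion : A ∪ B2 ∪ C2 = Set.univ := by
    apply Set.eq_univ_of_forall
    intro v
    by_cases h1 : hasL G v L1 <;> by_cases h2 : hasL G v L2
    · exact Or.inr ⟨h1, h2⟩
    · exact Or.inl (Or.inl ⟨h1, h2⟩)
    · exact Or.inl (Or.inr ⟨h1, h2⟩)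
    · rcases hcover v with h | h
      · exact absurd h h1
      · exact absurd h h2
  have hsum : A.ncard + B2.ncard + C2.ncard = n := by
    have h1 : (A ∪ B2 ∪ C2).ncard = n := by
      rw [hunion, Set.ncard_univ, Nat.card_eq_fintype_card, hn]
    rw [Set.ncard_union_eq hdisjABC (Set.toFinite _) (Set.toFinite _),
      Set.ncard_union_eq hdisjAB (Set.toFinite _) (Set.toFinite _)] at h1
    exact h1
  have hBU := card_B_add_card_U (G := G) n hlines
  rw [hU2, hBcard] at hBU
  have hα : 1 ≤ A.ncard := (Set.ncard_pos (Set.toFinite _)).mpr hAne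
  have hβ : 1 ≤ B2.ncard := (Set.ncard_pos (Set.toFinite _)).mpr hBne
  have hγ : C2.ncard ≤ 1 := by
    rcases hCsub.eq_empty_or_singleton with h | ⟨c0, h⟩
    · rw [h, Set.ncard_empty]; omega
    · rw [h, Set.ncard_singleton]
  have hP : A.ncard * B2.ncard = n - 2 := by omega
  have hsingle : A.ncard = 1 ∨ B2.ncard = 1 := by
    by_contra hc
    push_neg at hc
    have hα2 : 2 ≤ A.ncard := by omega
    have hβ2 : 2 ≤ B2.ncard := by omega
    have hle : A.ncard + B2.ncard ≤ A.ncard * B2.ncard := by nlinarith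
    rw [hP] at hle
    omega
  have finish : ∀ x : V, B2 = {x} ∨ A = {x} →
      (∀ a b : V, a ≠ x → b ≠ x → a ≠ b → G.Adj a b) ∧
      {y : V | G.Adj x y}.ncard ≤ 1 := by
    intro x hx
    constructor
    · intro c d hcx hdx hcd
      by_contra hnadj
      rcases hsplit c d hcd hnadj with ⟨hc, hd⟩ | ⟨hc, hd⟩ <;> rcases hx with h | h
      · rw [h] at hd; exact hdx hd
      · rw [h] at hc; exact hcx hc
      · rw [h] at hc; exact hcx hc
      · rw [h] at hd; exact hdx hd
    · have hvpart : ∀ v : V, v ∈ A ∨ v ∈ B2 ∨ v ∈ C2 := by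
        intro v
        rcases (by rw [hunion]; exact Set.mem_univ v : v ∈ A ∪ B2 ∪ C2) with (h | h) | h
        · exact Or.inl h
        · exact Or.inr (Or.inl h)
        · exact Or.inr (Or.inr h)
      have hxnC : x ∉ C2 := by
        intro hxc
        rcases hx with h | h
        · have : x ∈ B2 := by rw [h]; rfl
          exact this.1 hxc.1
        · have : x ∈ A := by rw [h]; rfl
          exact this.2 hxc.2
      have hNC : {y : V | G.Adj x y} = C2 := by
        ext v
        simp only [Set.mem_setOf_eq]
        constructor
        · intro hadj
          have hvx : v ≠ x := fun h => G.irrefl (h ▸ hadj)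
          rcases hvpart v with hv | hv | hv
          · rcases hx with h | h
            · have hxB : x ∈ B2 := by rw [h]; rfl
              exact absurd hadj.symm (hAB v hv x hxB)
            · rw [h] at hv
              exact absurd hv hvx
          · rcases hx with h | h
            · rw [h] at hv
              exact absurd hv hvx
            · have hxA : x ∈ A := by rw [h]; rfl
              exact absurd hadj (hAB x hxA v hv)
          · exact hv
        · intro hvC
          have hvx : v ≠ x := fun h => hxnC (h ▸ hvC)
          exact (hCuniv v hvC x (fun h => hvx h.symm)).symm
      rw [hNC]
      exact hγ
  rcases hsingle with h1 | h1
  · obtain ⟨x, hx⟩ := Set.ncard_eq_one.mp h1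
    exact ⟨x, finish x (Or.inr hx)⟩
  · obtain ⟨x, hx⟩ := Set.ncard_eq_one.mp h1
    exact ⟨x, finish x (Or.inl hx)⟩

end CaseB
section CaseC

variable {V : Type*} [Fintype V] {G : SimpleGraph V} [DecidableRel G.Adj]

lemma notMem_gline_left {a c z : V} (hadj : G.Adj a c) (hza : z ≠ a) (hzc : z ≠ c)
    (hn : ¬ G.Adj a z) : z ∉ gline G a c := by
  rw [mem_gline_adj hadj]
  rintro (rfl | rfl | ⟨h1, _⟩)
  · exact hza rfl
  · exact hzc rfl
  · exact hn h1

lemma notMem_gline_right {a c z : V} (hadj : G.Adj a c) (hza : z ≠ a) (hzc : z ≠ c)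
    (hn : ¬ G.Adj c z) : z ∉ gline G a c := by
  rw [mem_gline_adj hadj]
  rintro (rfl | rfl | ⟨_, h2⟩)
  · exact hza rfl
  · exact hzc rfl
  · exact hn h2

lemma mem_gline_common {a c z : V} (hadj : G.Adj a c) (h1 : G.Adj a z) (h2 : G.Adj c z) :
    z ∈ gline G a c := by
  rw [mem_gline_adj hadj]
  exact Or.inr (Or.inr ⟨h1, h2⟩)

lemma card_le_B_add_components :
    Fintype.card V ≤ (Bset G).ncard + Nat.card (Gᶜ.ConnectedComponent) := by
  classical
  set Gb := Gᶜ with hGb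
  set comp : V → Gb.ConnectedComponent := Gb.connectedComponentMk with hcomp
  set R : Set V := {v | (comp v).out = v} with hR
  have hcardR : R.ncard ≤ Nat.card Gb.ConnectedComponent := by
    have := Set.ncard_le_ncard_of_injOn comp
      (fun v _ => Set.mem_univ (comp v))
      (fun v hv w hw hvw => by
        have h1 : (comp v).out = v := hv
        have h2 : (comp w).out = w := hw
        rw [← h1, ← h2, hvw])
      (Set.toFinite _)
    rwa [Set.ncard_univ] at this
  have hstep : ∀ v : V, ∃ y : V, (comp v).out ≠ v →
      Gb.Adj v y ∧ Gb.dist ((comp v).out) y < Gb.dist ((comp v).out) v := by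
    intro v
    by_cases hv : (comp v).out = v
    · exact ⟨v, fun h => absurd hv h⟩
    · have hrv : Gb.Reachable ((comp v).out) v :=
        SimpleGraph.ConnectedComponent.exact (Quot.out_eq (comp v))
      have hd0 : Gb.dist ((comp v).out) v ≠ 0 :=
        SimpleGraph.dist_ne_zero_iff_ne_and_reachable.mpr ⟨hv, hrv⟩
      obtain ⟨p, hp⟩ := SimpleGraph.exists_walk_of_dist_ne_zero hd0
      obtain ⟨y, hadj, p', hp'⟩ :=
        SimpleGraph.Walk.exists_eq_cons_of_ne (fun h => hv h.symm) p.reverse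
      refine ⟨y, fun _ => ⟨hadj, ?_⟩⟩
      have hlen : p'.length + 1 = Gb.dist ((comp v).out) v := by
        have h2 : p.reverse.length = Gb.dist ((comp v).out) v := by
          rw [SimpleGraph.Walk.length_reverse, hp]
        rw [hp'] at h2
        simpa using h2
      have hdy : Gb.dist ((comp v).out) y ≤ p'.length := by
        have := SimpleGraph.dist_le p'.reverse
        rwa [SimpleGraph.Walk.length_reverse] at this
      omega
  choose step hstepspec using hstep
  have hcardRc : (Rᶜ : Set V).ncard ≤ (Bset G).ncard := by
    apply Set.ncard_le_ncard_of_injOn (fun v => ({v, step v} : Set V))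
    · intro v hv
      obtain ⟨hadj, _⟩ := hstepspec v hv
      rw [SimpleGraph.compl_adj] at hadj
      exact ⟨v, step v, hadj.1, hadj.2, rfl⟩
    · intro v hv w hw hvw
      obtain ⟨hadjv, hdistv⟩ := hstepspec v hv
      obtain ⟨hadjw, hdistw⟩ := hstepspec w hw
      have hvs : v ≠ step v := hadjv.ne
      rcases pair_eq_pair hvs (hvw : ({v, step v} : Set V) = {w, step w}) with ⟨h1, _⟩ | ⟨h1, h2⟩
      · exact h1
      · exfalso
        have hcv : comp (step v) = comp v :=
          (SimpleGraph.ConnectedComponent.connectedComponentMk_eq_of_adj hadjv).symm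
        have hcomp_eq : comp w = comp v := by rw [← h2]; exact hcv
        have e1 : Gb.dist ((comp v).out) w < Gb.dist ((comp v).out) v := by
          rw [← h2]; exact hdistv
        have e2 : Gb.dist ((comp v).out) v < Gb.dist ((comp v).out) w := by
          have e2' := hdistw
          rw [hcomp_eq] at e2'
          rw [← h1] at e2'
          exact e2'
        exact lt_asymm e1 e2
  have htot := Set.ncard_add_ncard_compl R (Set.toFinite _) (Set.toFinite _)
  rw [Nat.card_eq_fintype_card] at htot
  omega

lemma caseC (n : ℕ) (hn : Fintype.card V = n) (h4 : 4 ≤ n)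
    (huniv : ∀ a b : V, a ≠ b → gline G a b ≠ Set.univ)
    (hlines : (glines G).ncard = n)
    (hU3 : 3 ≤ (Uset G).ncard) : False := by
  classical
  set Gb := Gᶜ with hGb
  set comp : V → Gb.ConnectedComponent := Gb.connectedComponentMk with hcomp
  letI : Fintype Gb.ConnectedComponent := Fintype.ofFinite _
  set c := Nat.card Gb.ConnectedComponent with hc
  have hBU := card_B_add_card_U (G := G) n hlines
  have hnc := card_le_B_add_components (G := G)
  rw [hn, ← hGb] at hnc
  have huc : (Uset G).ncard ≤ c := by omega
  have hc3 : 3 ≤ c := le_trans hU3 huc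
  have hIso : ∀ v w : V, (∀ z, ¬ Gb.Adj v z) → (∀ z, ¬ Gb.Adj w z) → v = w := by
    intro v w hv hw
    apply universal_unique huniv
    · intro z hz
      by_contra hn'
      exact hv z (by rw [hGb, SimpleGraph.compl_adj]; exact ⟨Ne.symm hz, hn'⟩)
    · intro z hz
      by_contra hn'
      exact hw z (by rw [hGb, SimpleGraph.compl_adj]; exact ⟨Ne.symm hz, hn'⟩)
  have hout_inj : ∀ q q' : Gb.ConnectedComponent, q.out = q'.out → q = q' := by
    intro q q' h
    rw [← Quot.out_eq q, ← Quot.out_eq q', h]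
  have hcross : ∀ v w : V, comp v ≠ comp w → G.Adj v w := by
    intro v w h
    by_contra hnadj
    have hne : v ≠ w := fun he => h (he ▸ rfl)
    have hb : Gb.Adj v w := by rw [hGb, SimpleGraph.compl_adj]; exact ⟨hne, hnadj⟩
    exact h (SimpleGraph.ConnectedComponent.connectedComponentMk_eq_of_adj hb)
  have hGbne : ∀ {v w : V}, Gb.Adj v w → ¬ G.Adj v w := by
    intro v w h
    rw [hGb, SimpleGraph.compl_adj] at h
    exact h.2
  have hGbcomp : ∀ {v w : V}, Gb.Adj v w → comp v = comp w :=
    fun h => SimpleGraph.ConnectedComponent.connectedComponentMk_eq_of_adj h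
  have hcard3 : 3 ≤ Fintype.card Gb.ConnectedComponent := by
    rwa [← Nat.card_eq_fintype_card]
  obtain ⟨q1⟩ := Fintype.card_pos_iff.mp
    (show 0 < Fintype.card Gb.ConnectedComponent by omega)
  obtain ⟨q2, hq21⟩ := Fintype.exists_ne_of_one_lt_card
    (show 1 < Fintype.card Gb.ConnectedComponent by omega) q1
  have hq3ex : ((Finset.univ : Finset Gb.ConnectedComponent) \ {q1, q2}).Nonempty := by
    rw [← Finset.card_pos]
    have h2 : ({q1, q2} : Finset Gb.ConnectedComponent).card ≤ 2 :=
      (Finset.card_insert_le _ _).trans (by simp)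
    have h3 := Finset.card_sdiff_of_subset (Finset.subset_univ ({q1, q2} : Finset Gb.ConnectedComponent))
    rw [Finset.card_univ] at h3
    omega
  obtain ⟨q3, hq3⟩ := hq3ex
  rw [Finset.mem_sdiff, Finset.mem_insert, Finset.mem_singleton] at hq3
  push_neg at hq3
  have hpick : ∃ qa qb : Gb.ConnectedComponent, qa ≠ qb ∧
      (∃ y, Gb.Adj qa.out y) ∧ (∃ y, Gb.Adj qb.out y) := by
    by_cases h1 : ∃ y, Gb.Adj q1.out y
    · by_cases h2 : ∃ y, Gb.Adj q2.out y
      · exact ⟨q1, q2, Ne.symm hq21, h1, h2⟩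
      · by_cases h3 : ∃ y, Gb.Adj q3.out y
        · exact ⟨q1, q3, fun h => hq3.2.1 h.symm, h1, h3⟩
        · push_neg at h2 h3
          exact absurd (hout_inj _ _ (hIso _ _ h2 h3)) (fun h => hq3.2.2 h.symm)
    · by_cases h2 : ∃ y, Gb.Adj q2.out y
      · by_cases h3 : ∃ y, Gb.Adj q3.out y
        · exact ⟨q2, q3, fun h => hq3.2.2 h.symm, h2, h3⟩
        · push_neg at h1 h3
          exact absurd (hout_inj _ _ (hIso _ _ h1 h3)) (fun h => hq3.2.1 h.symm)
      · push_neg at h1 h2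
        exact absurd (hout_inj _ _ (hIso _ _ h1 h2)) hq21.symm
  obtain ⟨qa, qb, hqab, ⟨b, hb⟩, ⟨b', hb'⟩⟩ := hpick
  set a : V := qa.out with ha
  set a' : V := qb.out with ha'
  have hca : comp a = qa := Quot.out_eq qa
  have hca' : comp a' = qb := Quot.out_eq qb
  have hcb : comp b = qa := by rw [← hca]; exact (hGbcomp hb).symm
  have hcb' : comp b' = qb := by rw [← hca']; exact (hGbcomp hb').symm
  have haa' : G.Adj a a' := hcross _ _ (by rw [hca, hca']; exact hqab)
  have hab' : G.Adj a b' := hcross _ _ (by rw [hca, hcb']; exact hqab)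
  have hba' : G.Adj b a' := hcross _ _ (by rw [hcb, hca']; exact hqab)
  have hbb' : G.Adj b b' := hcross _ _ (by rw [hcb, hcb']; exact hqab)
  set l1 : Set V := gline G a a' with hl1
  set l2 : Set V := gline G a b' with hl2
  set l3 : Set V := gline G b a' with hl3
  set l4 : Set V := gline G b b' with hl4
  have hbna : b ≠ a := hb.ne'
  have hb'na' : b' ≠ a' := hb'.ne'
  have hbna' : b ≠ a' := fun h => hqab (by rw [← hcb, h, hca'])
  have hb'na : b' ≠ a := fun h => hqab (by rw [← hca, ← h, hcb'])
  have hbnb' : b ≠ b' := fun h => hqab (by rw [← hcb, h, hcb'])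
  have hnGab : ¬ G.Adj a b := hGbne hb
  have hnGa'b' : ¬ G.Adj a' b' := hGbne hb'
  have hbl1 : b ∉ l1 := notMem_gline_left haa' hbna hbna' hnGab
  have hbl2 : b ∉ l2 := notMem_gline_left hab' hbna hbnb' hnGab
  have hbl3 : b ∈ l3 := left_mem_gline b a'
  have hbl4 : b ∈ l4 := left_mem_gline b b'
  have hb'l1 : b' ∉ l1 := notMem_gline_right haa' hb'na hb'na' hnGa'b'
  have hb'l3 : b' ∉ l3 := notMem_gline_right hba' (Ne.symm hbnb') hb'na' hnGa'b'
  have hb'l2 : b' ∈ l2 := right_mem_gline a b'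
  have hb'l4 : b' ∈ l4 := right_mem_gline b b'
  have hal2 : a ∈ l2 := left_mem_gline a b'
  have hal4 : a ∉ l4 := notMem_gline_left hbb' (Ne.symm hbna) (Ne.symm hb'na)
      (fun h => hnGab h.symm)
  have ha'l2 : a' ∉ l2 := notMem_gline_right hab' (Ne.symm haa'.ne) (Ne.symm hb'na')
      (fun h => hnGa'b' h.symm)
  have h12 : l1 ≠ l2 := fun h => hb'l1 (h ▸ hb'l2)
  have h13 : l1 ≠ l3 := fun h => hbl1 (h ▸ hbl3)
  have h14 : l1 ≠ l4 := fun h => hbl1 (h ▸ hbl4)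
  have h23 : l2 ≠ l3 := fun h => hbl2 (h ▸ hbl3)
  have h24 : l2 ≠ l4 := fun h => hal4 (h ▸ hal2)
  have h34 : l3 ≠ l4 := fun h => hb'l3 (h ▸ hb'l4)
  set others : Finset Gb.ConnectedComponent := Finset.univ \ {qa, qb} with hothers
  have hothers_card : others.card = c - 2 := by
    rw [hothers, Finset.card_sdiff_of_subset (Finset.subset_univ _)]
    have h2 : ({qa, qb} : Finset Gb.ConnectedComponent).card = 2 := by
      rw [Finset.card_insert_of_notMem (by simpa using hqab), Finset.card_singleton]
    rw [h2, Finset.card_univ, ← Nat.card_eq_fintype_card]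
  have hothers_mem : ∀ q ∈ others, q ≠ qa ∧ q ≠ qb := by
    intro q hq
    rw [hothers, Finset.mem_sdiff, Finset.mem_insert, Finset.mem_singleton] at hq
    push_neg at hq
    exact hq.2
  set Φ : Gb.ConnectedComponent → Set V := fun q => gline G a q.out with hΦ
  have hqout : ∀ q : Gb.ConnectedComponent, comp q.out = q := fun q => Quot.out_eq q
  have hadj_a_out : ∀ q ∈ others, G.Adj a q.out := by
    intro q hq
    exact hcross _ _ (by rw [hca, hqout]; exact Ne.symm (hothers_mem q hq).1)
  have hΦU : ∀ q ∈ others, Φ q ∈ Uset G := by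
    intro q hq
    exact edge_gline_mem_Uset (hadj_a_out q hq)
  -- a witness y adjacent (in Gb) to q.out
  have hWitNon : ∀ q ∈ others, ∀ y, Gb.Adj q.out y →
      y ∉ Φ q ∧ (∀ q' ∈ others, q' ≠ q → y ∈ Φ q') ∧ (y ∈ l1 ∧ y ∈ l2 ∧ y ∈ l3 ∧ y ∈ l4) := by
    intro q hq y hy
    have hcy : comp y = q := by rw [← hqout q]; exact (hGbcomp hy).symm
    have hGay : G.Adj a y := hcross _ _ (by rw [hca, hcy]; exact Ne.symm (hothers_mem q hq).1)
    have hGa'y : G.Adj a' y := hcross _ _ (by rw [hca', hcy]; exact Ne.symm (hothers_mem q hq).2)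
    have hGby : G.Adj b y := hcross _ _ (by rw [hcb, hcy]; exact Ne.symm (hothers_mem q hq).1)
    have hGb'y : G.Adj b' y := hcross _ _ (by rw [hcb', hcy]; exact Ne.symm (hothers_mem q hq).2)
    refine ⟨notMem_gline_right (hadj_a_out q hq) hGay.ne' hy.ne' (hGbne hy), ?_,
      mem_gline_common haa' hGay hGa'y, mem_gline_common hab' hGay hGb'y,
      mem_gline_common hba' hGby hGa'y, mem_gline_common hbb' hGby hGb'y⟩
    intro q' hq' hq'q
    apply mem_gline_common (hadj_a_out q' hq') hGay
    exact hcross _ _ (by rw [hqout q', hcy]; exact hq'q)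
  -- isolated-case witnesses
  have hWitIso : ∀ q ∈ others,
      b' ∈ Φ q ∧ a' ∈ Φ q ∧ b ∉ Φ q := by
    intro q hq
    have hGxb' : G.Adj q.out b' := hcross _ _ (by rw [hqout q, hcb']; exact (hothers_mem q hq).2)
    have hGxa' : G.Adj q.out a' := hcross _ _ (by rw [hqout q, hca']; exact (hothers_mem q hq).2)
    have hbnx : b ≠ q.out := fun h => (hothers_mem q hq).1 (by rw [← hqout q, ← h, hcb])
    exact ⟨mem_gline_common (hadj_a_out q hq) hab' hGxb',
      mem_gline_common (hadj_a_out q hq) haa' hGxa',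
      notMem_gline_left (hadj_a_out q hq) hbna hbnx hnGab⟩
  -- Φ q differs from all four lines
  have hΦne : ∀ q ∈ others, Φ q ≠ l1 ∧ Φ q ≠ l2 ∧ Φ q ≠ l3 ∧ Φ q ≠ l4 := by
    intro q hq
    by_cases hqi : ∃ y, Gb.Adj q.out y
    · obtain ⟨y, hy⟩ := hqi
      obtain ⟨hy1, _, hy3⟩ := hWitNon q hq y hy
      exact ⟨fun h => hy1 (h ▸ hy3.1), fun h => hy1 (h ▸ hy3.2.1),
        fun h => hy1 (h ▸ hy3.2.2.1), fun h => hy1 (h ▸ hy3.2.2.2)⟩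
    · obtain ⟨hw1, hw2, hw3⟩ := hWitIso q hq
      exact ⟨fun h => hb'l1 (h ▸ hw1), fun h => ha'l2 (h ▸ hw2),
        fun h => hw3 (h ▸ hbl3), fun h => hw3 (h ▸ hbl4)⟩
  -- injectivity of Φ on others
  have hΦinj : Set.InjOn Φ (others : Set (Gb.ConnectedComponent)) := by
    intro q hq q' hq' heq
    by_contra hne
    have hq'' : q ∈ others := by simpa using hq
    have hq''' : q' ∈ others := by simpa using hq'
    by_cases hqi : ∃ y, Gb.Adj q'.out y
    · obtain ⟨y, hy⟩ := hqi
      obtain ⟨hy1, hy2, _⟩ := hWitNon q' hq''' y hy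
      exact hy1 (heq ▸ hy2 q hq'' hne)
    · by_cases hqi2 : ∃ y, Gb.Adj q.out y
      · obtain ⟨y, hy⟩ := hqi2
        obtain ⟨hy1, hy2, _⟩ := hWitNon q hq'' y hy
        exact hy1 (heq.symm ▸ hy2 q' hq''' (fun h => hne h.symm))
      · push_neg at hqi hqi2
        exact hne (hout_inj _ _ (hIso _ _ hqi2 hqi))
  -- assemble the finset
  set Simg : Finset (Set V) := others.image Φ with hSimg
  have hSimg_card : Simg.card = c - 2 := by
    rw [hSimg, Finset.card_image_of_injOn hΦinj, hothers_card]
  have hlnotin : ∀ l : Set V, (l = l1 ∨ l = l2 ∨ l = l3 ∨ l = l4) → l ∉ Simg := by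
    rintro l hl hmem
    rw [hSimg, Finset.mem_image] at hmem
    obtain ⟨q, hq, heq⟩ := hmem
    obtain ⟨k1, k2, k3, k4⟩ := hΦne q hq
    rcases hl with rfl | rfl | rfl | rfl
    · exact k1 heq
    · exact k2 heq
    · exact k3 heq
    · exact k4 heq
  set T : Finset (Set V) := insert l1 (insert l2 (insert l3 (insert l4 Simg))) with hT
  have hTcard : T.card = 4 + (c - 2) := by
    rw [hT]
    rw [Finset.card_insert_of_notMem (by
      simp only [Finset.mem_insert]
      push_neg
      exact ⟨h12, h13, h14, hlnotin l1 (Or.inl rfl)⟩)]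
    rw [Finset.card_insert_of_notMem (by
      simp only [Finset.mem_insert]
      push_neg
      exact ⟨h23, h24, hlnotin l2 (Or.inr (Or.inl rfl))⟩)]
    rw [Finset.card_insert_of_notMem (by
      simp only [Finset.mem_insert]
      push_neg
      exact ⟨h34, hlnotin l3 (Or.inr (Or.inr (Or.inl rfl)))⟩)]
    rw [Finset.card_insert_of_notMem (hlnotin l4 (Or.inr (Or.inr (Or.inr rfl))))]
    rw [hSimg_card]
    omega
  have hTsub : (↑T : Set (Set V)) ⊆ Uset G := by
    intro s hs
    simp only [hT, Finset.coe_insert, Set.mem_insert_iff, Finset.mem_coe] at hs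
    rcases hs with rfl | rfl | rfl | rfl | hs
    · exact edge_gline_mem_Uset haa'
    · exact edge_gline_mem_Uset hab'
    · exact edge_gline_mem_Uset hba'
    · exact edge_gline_mem_Uset hbb'
    · rw [hSimg, Finset.mem_image] at hs
      obtain ⟨q, hq, heq⟩ := hs
      exact heq ▸ hΦU q hq
  have hle : T.card ≤ (Uset G).ncard := by
    have := Set.ncard_le_ncard hTsub (Set.toFinite _)
    rwa [Set.ncard_coe_finset] at this
  omega

end CaseC
section Main

variable {V : Type*} [Fintype V] {G : SimpleGraph V} [DecidableRel G.Adj]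

lemma ncard_compl_singleton (n : ℕ) (hn : Fintype.card V = n) (x : V) :
    ({x}ᶜ : Set V).ncard = n - 1 := by
  have := Set.ncard_add_ncard_compl ({x} : Set V) (Set.toFinite _) (Set.toFinite _)
  rw [Set.ncard_singleton, Nat.card_eq_fintype_card, hn] at this
  omega

lemma caseA (n : ℕ) (hn : Fintype.card V = n) (h4 : 4 ≤ n)
    (hlines : (glines G).ncard = n) (x₀ : V) (hx : ∀ w, ¬ G.Adj x₀ w) :
    ∃ x : V, (∀ a b : V, a ≠ x → b ≠ x → a ≠ b → G.Adj a b) ∧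
      {y : V | G.Adj x y}.ncard ≤ 1 := by
  obtain ⟨a, b, hab⟩ := exists_edge n hn h4 hlines
  have hU1 : 1 ≤ (Uset G).ncard := by
    rw [Nat.one_le_iff_ne_zero, Ne, Set.ncard_eq_zero (Set.toFinite _)]
    intro h
    exact absurd (edge_gline_mem_Uset hab) (h ▸ Set.notMem_empty _)
  set F : Set (Set V) := (fun v => ({x₀, v} : Set V)) '' {x₀}ᶜ with hF
  have hFB : F ⊆ Bset G := by
    rintro s ⟨v, hv, rfl⟩
    have hvx : v ≠ x₀ := by simpa using hv
    exact ⟨x₀, v, Ne.symm hvx, hx v, rfl⟩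
  have hinj : Set.InjOn (fun v => ({x₀, v} : Set V)) {x₀}ᶜ := by
    intro c hc d hd hcd
    have hc' : c ≠ x₀ := by simpa using hc
    rcases pair_eq_pair (Ne.symm hc') (hcd : ({x₀, c} : Set V) = {x₀, d}) with ⟨_, h⟩ | ⟨h1, h2⟩
    · exact h
    · exact absurd h2 hc'
  have hcardF : F.ncard = n - 1 := by
    rw [hF, Set.ncard_image_of_injOn hinj, ncard_compl_singleton n hn x₀]
  have hBU := card_B_add_card_U (G := G) n hlines
  have hBle : (Bset G).ncard ≤ n - 1 := by omega
  have hFeq : F = Bset G :=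
    Set.eq_of_subset_of_ncard_le hFB (by omega) (Set.toFinite _)
  refine ⟨x₀, ?_, ?_⟩
  · intro c d hcx hdx hcd
    by_contra hnadj
    have : ({c, d} : Set V) ∈ Bset G := ⟨c, d, hcd, hnadj, rfl⟩
    rw [← hFeq] at this
    obtain ⟨v, hv, hpair⟩ := this
    rcases pair_eq_pair (Ne.symm hcd).symm (hpair.symm : ({c, d} : Set V) = {x₀, v}) with ⟨h1, _⟩ | ⟨_, h2⟩
    · exact hcx h1
    · exact hdx h2
  · have : {y : V | G.Adj x₀ y} = ∅ := by
      ext y; simp only [Set.mem_setOf_eq, Set.mem_empty_iff_false, iff_false]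
      exact hx y
    rw [this, Set.ncard_empty]
    omega

end Main

theorem stmt_4 {V : Type*} [Fintype V] (G : SimpleGraph V) [DecidableRel G.Adj]
    (n : ℕ) (hn : Fintype.card V = n) (h4 : 4 ≤ n)
    (huniv : ∀ a b : V, a ≠ b → gline G a b ≠ Set.univ)
    (hlines : (glines G).ncard = n) :
    ∃ x : V, (∀ a b : V, a ≠ x → b ≠ x → a ≠ b → G.Adj a b) ∧
      {y : V | G.Adj x y}.ncard ≤ 1 := by
  classical
  by_cases hiso : ∃ x₀ : V, ∀ w, ¬ G.Adj x₀ w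
  · obtain ⟨x₀, hx⟩ := hiso
    exact caseA n hn h4 hlines x₀ hx
  · push_neg at hiso
    have hedge : ∀ v : V, ∃ w, G.Adj v w := by
      intro v
      obtain ⟨w, hw⟩ := hiso v
      exact ⟨w, hw⟩
    have hU1 : 1 ≤ (Uset G).ncard := by
      have hpos : 0 < Fintype.card V := by omega
      obtain ⟨v⟩ := Fintype.card_pos_iff.mp hpos
      obtain ⟨w, hw⟩ := hedge v
      rw [Nat.one_le_iff_ne_zero, Ne, Set.ncard_eq_zero (Set.toFinite _)]
      intro h
      exact absurd (edge_gline_mem_Uset hw) (h ▸ Set.notMem_empty _)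
    have hU1' : (Uset G).ncard ≠ 1 := by
      intro h1
      obtain ⟨L0, hL0⟩ := (Set.ncard_eq_one (s := Uset G)).mp h1
      have hmem : ∀ v : V, v ∈ L0 := by
        intro v
        obtain ⟨w, hw⟩ := hedge v
        have : gline G v w ∈ Uset G := edge_gline_mem_Uset hw
        rw [hL0, Set.mem_singleton_iff] at this
        exact this ▸ left_mem_gline v w
      have huniva : L0 = Set.univ := Set.eq_univ_of_forall hmem
      have : L0 ∈ Uset G := hL0 ▸ rfl
      obtain ⟨a, b, hab, hgl⟩ := mem_Uset_iff.mp this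
      exact huniv a b hab.ne (hgl ▸ huniva)
    rcases Nat.lt_or_ge (Uset G).ncard 3 with hlt | hge
    · have : (Uset G).ncard = 2 := by omega
      exact caseB' n hn h4 huniv hlines hedge this
    · exact absurd (caseC n hn h4 huniv hlines hge) id
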